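/- Let k be a positive definite function on S and let X̲ be a finite set of distinct points in S with k(X̲,X̲) invertible. Then the Nyström function ξ_1(x,x') = k(x,X̲) k(X̲,X̲)^{-1} k(X̲,x') is a positive definite function on S. -/

import Mathlib

/-- The Gram matrix `k(X̲,X̲)` of a kernel `k` at the landmark points `u 0, …, u (r-1)`. -/
noncomputable def gramMatrix {S : Type*} (k : S → S → ℝ) {r : ℕ} (u : Fin r → S) :
    Matrix (Fin r) (Fin r) ℝ :=
  Matrix.of fun a b => k (u a) (u b)

/-- The Nyström approximation `k(x,X̲) k(X̲,X̲)⁻¹ k(X̲,x')`. -/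
noncomputable def nystrom {S : Type*} (k : S → S → ℝ) {r : ℕ} (u : Fin r → S)
    (x x' : S) : ℝ :=
  ∑ a, ∑ b, k x (u a) * (gramMatrix k u)⁻¹ a b * k (u b) x'

/-- A symmetric function `k : S × S → ℝ` is positive definite if every quadratic form
`∑ᵢⱼ αᵢ αⱼ k(xᵢ,xⱼ)` is nonnegative. -/
def IsPosDefKernel {S : Type*} (k : S → S → ℝ) : Prop :=
  (∀ x x', k x x' = k x' x) ∧
  ∀ (n : ℕ) (x : Fin n → S) (α : Fin n → ℝ),
    0 ≤ ∑ i, ∑ j, α i * α j * k (x i) (x j)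

/-- A symmetric function `k : S × S → ℝ` is strictly positive definite if every quadratic
form `∑ᵢⱼ αᵢ αⱼ k(xᵢ,xⱼ)` at distinct points with not-all-zero coefficients is positive. -/
def IsStrictPosDefKernel {S : Type*} (k : S → S → ℝ) : Prop :=
  (∀ x x', k x x' = k x' x) ∧
  ∀ (n : ℕ) (x : Fin n → S) (α : Fin n → ℝ),
    Function.Injective x → α ≠ 0 →
      0 < ∑ i, ∑ j, α i * α j * k (x i) (x j)

/-- if `k` is positive definite and `X̲` is a finite set of distinct points
with `k(X̲,X̲)` invertible, then the Nyström function
`ξ₁(x,x') = k(x,X̲) k(X̲,X̲)⁻¹ k(X̲,x')` is positive definite on `S`. -/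
theorem nystrom_posDef {S : Type*} (k : S → S → ℝ)
    (hk : IsPosDefKernel k)
    {r : ℕ} (u : Fin r → S) (hu : Function.Injective u)
    (hK : IsUnit (gramMatrix k u).det) :
    IsPosDefKernel (nystrom k u) := by
  obtain ⟨hsymm, hpos⟩ := hk
  set K := gramMatrix k u with hKdef
  -- K is positive semidefinite
  have hKpsd : K.PosSemidef := by
    refine Matrix.PosSemidef.of_dotProduct_mulVec_nonneg ?_ ?_
    · ext a b
      simp [hKdef, gramMatrix, Matrix.conjTranspose_apply, hsymm (u a) (u b)]
    · intro v
      have h := hpos r u v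
      have e : dotProduct (star v) (K.mulVec v) = ∑ i, ∑ j, v i * v j * k (u i) (u j) := by
        simp only [dotProduct, Matrix.mulVec, star_trivial, Finset.mul_sum, hKdef,
          gramMatrix, Matrix.of_apply]
        exact Finset.sum_congr rfl fun a _ => Finset.sum_congr rfl fun b _ => by ring
      rw [e]; exact h
  have hKinv : (K⁻¹).PosSemidef := hKpsd.inv
  have hKinvsymm : ∀ a b, K⁻¹ a b = K⁻¹ b a := by
    intro a b
    have := hKinv.1
    rw [Matrix.IsHermitian] at this
    conv_lhs => rw [← this]
    simp [Matrix.conjTranspose_apply]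
  constructor
  · intro x x'
    unfold nystrom
    rw [Finset.sum_comm]
    refine Finset.sum_congr rfl fun a _ => Finset.sum_congr rfl fun b _ => ?_
    rw [hsymm x (u b), hsymm (u a) x', hKinvsymm b a]
    ring
  · intro n x α
    set V : Matrix (Fin n) (Fin r) ℝ := Matrix.of fun i a => k (x i) (u a) with hV
    have hN : (V * K⁻¹ * V.conjTranspose).PosSemidef := hKinv.mul_mul_conjTranspose_same V
    have h0 := hN.dotProduct_mulVec_nonneg α
    have heq : dotProduct (star α) ((V * K⁻¹ * V.conjTranspose).mulVec α)
        = ∑ i, ∑ j, α i * α j * nystrom k u (x i) (x j) := by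
      simp only [dotProduct, Matrix.mulVec, star_trivial, Matrix.mul_apply,
        Matrix.conjTranspose_apply, star_trivial, nystrom, hV, Matrix.of_apply,
        Finset.mul_sum, Finset.sum_mul, ← hKdef]
      refine Finset.sum_congr rfl fun i _ => Finset.sum_congr rfl fun j _ => ?_
      rw [Finset.sum_comm]
      refine Finset.sum_congr rfl fun a _ => Finset.sum_congr rfl fun b _ => ?_
      rw [hsymm (u b) (x j)]
      ring
    rw [← heq]
    exact h0
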